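/- Let c₁ and c₃ be real numbers. Every complex root λ of the polynomial λ³ − c₁ λ² − c₃ satisfies |λ| < 1 if and only if |c₁ + c₃| < 1 and |c₁ c₃| < 1 − c₃². (This is the Schur–Cohn stability criterion, Eq. (35), characterizing asymptotic stability of a fixed point of the linearized fitness dynamics y_t = c₁ y_{t−1} + c₃ y_{t−3}.) -/

import Mathlib

private lemma abs_lt_one_of_normSq {z : ℂ} (h : z.re ^ 2 + z.im ^ 2 < 1) :
    ‖z‖ < 1 := by
  nlinarith [Complex.sq_norm z, norm_nonneg z, Complex.normSq_apply z]

private lemma normSq_lt_one_of_abs {z : ℂ} (h : ‖z‖ < 1) :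
    z.re ^ 2 + z.im ^ 2 < 1 := by
  nlinarith [Complex.sq_norm z, norm_nonneg z, Complex.normSq_apply z]

/-- A cubic with real coefficients has a real root. -/
private lemma cubic_real_root (c₁ c₃ : ℝ) : ∃ r : ℝ, r ^ 3 - c₁ * r ^ 2 - c₃ = 0 := by
  set f : ℝ → ℝ := fun x => x ^ 3 - c₁ * x ^ 2 - c₃ with hf
  set M : ℝ := 1 + |c₁| + |c₃| with hM
  have h3 : |c₃| ≥ 0 := abs_nonneg _
  have h4 : |c₁| ≥ 0 := abs_nonneg _
  have hM1 : (1:ℝ) ≤ M := by rw [hM]; linarith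
  have hle : -M ≤ M := by linarith
  have hfM : 0 ≤ f M := by
    have hc1 : c₁ ≤ |c₁| := le_abs_self c₁
    have hc3 : c₃ ≤ |c₃| := le_abs_self c₃
    simp only [hf]
    nlinarith [sq_nonneg M, sq_nonneg (M - 1)]
  have hfm : f (-M) ≤ 0 := by
    have hc1 : -c₁ ≤ |c₁| := neg_le_abs c₁
    have hc3 : -c₃ ≤ |c₃| := neg_le_abs c₃
    simp only [hf]
    nlinarith [sq_nonneg M, sq_nonneg (M - 1)]
  have hcont : ContinuousOn f (Set.Icc (-M) M) := by
    apply Continuous.continuousOn; continuity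
  have := intermediate_value_Icc hle hcont
  have h0 : (0:ℝ) ∈ Set.Icc (f (-M)) (f M) := ⟨hfm, hfM⟩
  obtain ⟨r, _, hr⟩ := this h0
  exact ⟨r, hr⟩

/-- A quadratic with real coefficients has a real root on `[1, ∞)` if `q 1 ≤ 0`. -/
private lemma quad_root_ge_one {b c : ℝ} (h : 1 + b + c ≤ 0) :
    ∃ x : ℝ, 1 ≤ x ∧ x ^ 2 + b * x + c = 0 := by
  set f : ℝ → ℝ := fun x => x ^ 2 + b * x + c with hf
  set M : ℝ := 1 + |b| + |c| with hM
  have h3 : |c| ≥ 0 := abs_nonneg _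
  have h4 : |b| ≥ 0 := abs_nonneg _
  have hM1 : (1:ℝ) ≤ M := by rw [hM]; linarith
  have hfM : 0 ≤ f M := by
    have hc1 : -b ≤ |b| := neg_le_abs b
    have hc3 : -c ≤ |c| := neg_le_abs c
    have h3 : |c| ≥ 0 := abs_nonneg _
    have h4 : |b| ≥ 0 := abs_nonneg _
    simp only [hf, hM]
    nlinarith [sq_nonneg (|b| + |c|)]
  have hcont : ContinuousOn f (Set.Icc 1 M) := by
    apply Continuous.continuousOn; continuity
  have hf1 : f 1 ≤ 0 := by simp only [hf]; nlinarith
  have h0 : (0:ℝ) ∈ Set.Icc (f 1) (f M) := ⟨hf1, hfM⟩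
  obtain ⟨x, hx, hxr⟩ := intermediate_value_Icc hM1 hcont h0
  exact ⟨x, hx.1, hxr⟩

private lemma quad_root_le_neg_one {b c : ℝ} (h : 1 - b + c ≤ 0) :
    ∃ x : ℝ, x ≤ -1 ∧ x ^ 2 + b * x + c = 0 := by
  obtain ⟨x, hx1, hx⟩ := quad_root_ge_one (b := -b) (c := c) (by linarith)
  exact ⟨-x, by linarith, by nlinarith⟩

/-- Forward Schur–Cohn for the quadratic `λ² + bλ + c`. -/
private lemma quad_fwd {b c : ℝ}
    (h : ∀ lam : ℂ, lam ^ 2 + (b : ℂ) * lam + (c : ℂ) = 0 → ‖lam‖ < 1) :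
    c < 1 ∧ 0 < 1 + b + c ∧ 0 < 1 - b + c := by
  have habs : ∀ x : ℝ, x ^ 2 + b * x + c = 0 → |x| < 1 := by
    intro x hx
    have : ((x:ℂ)) ^ 2 + (b:ℂ) * x + c = 0 := by exact_mod_cast congrArg (Complex.ofReal) hx
    simpa using h x this
  have h2 : 0 < 1 + b + c := by
    by_contra hcon
    push_neg at hcon
    obtain ⟨x, hx1, hx⟩ := quad_root_ge_one (b := b) (c := c) (by linarith)
    have := habs x hx
    rw [abs_lt] at this
    linarith
  have h3 : 0 < 1 - b + c := by
    by_contra hcon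
    push_neg at hcon
    obtain ⟨x, hx1, hx⟩ := quad_root_le_neg_one (b := b) (c := c) (by linarith)
    have := habs x hx
    rw [abs_lt] at this
    linarith
  refine ⟨?_, h2, h3⟩
  -- use complex roots: product of roots is c
  obtain ⟨s, hs⟩ := IsAlgClosed.exists_pow_nat_eq ((b:ℂ) ^ 2 - 4 * (c:ℂ)) (n := 2) (by norm_num)
  set l1 : ℂ := (-(b:ℂ) + s) / 2 with hl1
  set l2 : ℂ := (-(b:ℂ) - s) / 2 with hl2
  have hr1 : l1 ^ 2 + (b:ℂ) * l1 + c = 0 := by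
    simp only [hl1]; field_simp; linear_combination hs
  have hr2 : l2 ^ 2 + (b:ℂ) * l2 + c = 0 := by
    simp only [hl2]; field_simp; linear_combination hs
  have hprod : l1 * l2 = (c : ℂ) := by
    simp only [hl1, hl2]; field_simp; linear_combination -hs
  have hlt : ‖l1 * l2‖ < 1 := by
    rw [norm_mul]
    have a1 := h l1 hr1
    have a2 := h l2 hr2
    nlinarith [norm_nonneg l1, norm_nonneg l2]
  rw [hprod] at hlt
  simp only [Complex.norm_real, Real.norm_eq_abs] at hlt
  calc c ≤ |c| := le_abs_self c
    _ < 1 := hlt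

/-- Reverse Schur–Cohn for the quadratic `λ² + bλ + c`. -/
private lemma quad_rev {b c : ℝ} (hc : c < 1) (h1 : 0 < 1 + b + c) (h2 : 0 < 1 - b + c) :
    ∀ lam : ℂ, lam ^ 2 + (b : ℂ) * lam + (c : ℂ) = 0 → ‖lam‖ < 1 := by
  intro lam hl
  rw [Complex.ext_iff] at hl
  obtain ⟨hre, him⟩ := hl
  set x := lam.re with hx
  set y := lam.im with hy
  simp only [Complex.add_re, Complex.add_im, Complex.mul_re, Complex.mul_im,
    Complex.ofReal_re, Complex.ofReal_im, pow_two, Complex.zero_re, Complex.zero_im] at hre him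
  apply abs_lt_one_of_normSq
  rw [← hx, ← hy] at *
  rcases mul_eq_zero.mp (show y * (x + x + b) = 0 by linarith) with hy0 | hxb
  · -- real root
    rw [hy0]
    have hx0 : x * x + b * x + c = 0 := by rw [hy0] at hre; linarith
    have hlt : x < 1 := by
      by_contra hge
      push_neg at hge
      nlinarith [mul_nonneg (by linarith : (0:ℝ) ≤ x - 1) (by linarith : (0:ℝ) ≤ x - c)]
    have hgt : -1 < x := by
      by_contra hge
      push_neg at hge
      nlinarith [mul_nonneg (by linarith : (0:ℝ) ≤ -x - 1) (by linarith : (0:ℝ) ≤ -x - c)]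
    nlinarith
  · -- complex pair: b = -2x, c = x² + y²
    have hb : b = -(x + x) := by linarith
    have : x ^ 2 + y ^ 2 = c := by rw [hb] at hre; nlinarith
    linarith


private lemma no_big_root {r b : ℝ}
    (h1a : -1 < r - b + r ^ 2 * b) (h1b : r - b + r ^ 2 * b < 1)
    (h2a : -(1 - (r ^ 2 * b) ^ 2) < (r - b) * (r ^ 2 * b))
    (h2b : (r - b) * (r ^ 2 * b) < 1 - (r ^ 2 * b) ^ 2)
    (hge : 1 ≤ r) : False := by
  nlinarith [sq_nonneg (r * b), sq_nonneg (r - 1), sq_nonneg (r * b + 1),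
    mul_nonneg (by linarith : (0:ℝ) ≤ r - 1) (sq_nonneg (r * b)),
    sq_nonneg ((r - 1) * b), sq_nonneg (r * b * (r - 1))]

/-- The Schur–Cohn stability criterion (Eq. (35) of the paper): every complex
root `λ` of `λ³ − c₁ λ² − c₃` satisfies `|λ| < 1` if and only if
`|c₁ + c₃| < 1` and `|c₁ c₃| < 1 − c₃²`. -/
theorem stmt18 (c₁ c₃ : ℝ) :
    (∀ lam : ℂ, lam ^ 3 - (c₁ : ℂ) * lam ^ 2 - (c₃ : ℂ) = 0 → ‖lam‖ < 1)
      ↔ (|c₁ + c₃| < 1 ∧ |c₁ * c₃| < 1 - c₃ ^ 2) := by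
  obtain ⟨r, hr⟩ := cubic_real_root c₁ c₃
  set b : ℝ := r - c₁ with hb
  have hc₃ : c₃ = r ^ 2 * b := by rw [hb]; nlinarith
  have hc₁ : c₁ = r - b := by rw [hb]; ring
  have hfact : ∀ lam : ℂ, lam ^ 3 - (c₁ : ℂ) * lam ^ 2 - (c₃ : ℂ)
      = (lam - r) * (lam ^ 2 + (b : ℂ) * lam + ((r * b : ℝ) : ℂ)) := by
    intro lam
    have h1 : (c₃ : ℂ) = (r:ℂ) ^ 2 * (b:ℂ) := by exact_mod_cast congrArg Complex.ofReal hc₃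
    have h2 : (c₁ : ℂ) = (r:ℂ) - (b:ℂ) := by exact_mod_cast congrArg Complex.ofReal hc₁
    rw [h1, h2]; push_cast; ring
  constructor
  · intro h
    -- r is a root
    have hrabs : |r| < 1 := by
      have : ((r:ℂ)) ^ 3 - (c₁:ℂ) * (r:ℂ) ^ 2 - (c₃:ℂ) = 0 := by
        exact_mod_cast congrArg (Complex.ofReal) hr
      simpa using h r this
    obtain ⟨hq1, hq2, hq3⟩ := quad_fwd (b := b) (c := r * b) (by
      intro lam hl
      apply h lam
      rw [hfact lam, hl, mul_zero])
    rw [abs_lt] at hrabs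
    obtain ⟨hrm, hrp⟩ := hrabs
    rw [hc₁, hc₃]
    constructor
    · rw [abs_lt]
      constructor
      · nlinarith [mul_pos (by linarith : (0:ℝ) < 1 + r) hq3]
      · nlinarith [mul_pos (by linarith : (0:ℝ) < 1 - r) hq2]
    · rw [abs_lt]
      constructor
      · -- -(1 - c₃²) < c₁ c₃ : i.e. 1 - r⁴b² + r³b - r²b² > 0
        have hr3p : (0:ℝ) < 1 + r ^ 3 := by nlinarith [sq_nonneg (r + 1), sq_nonneg (r - 1)]
        have hr3m : (0:ℝ) < 1 - r ^ 3 := by nlinarith [sq_nonneg (r + 1), sq_nonneg (r - 1)]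
        have key : (0:ℝ) < 1 + r * b + r ^ 3 * b := by
          nlinarith [mul_pos hr3p hq2, mul_pos hr3m hq3]
        nlinarith [mul_pos key (by linarith : (0:ℝ) < 1 - r * b)]
      · -- c₁ c₃ < 1 - c₃² : i.e. 1 - r⁴b² - r³b + r²b² > 0
        nlinarith [sq_nonneg (r * b), sq_nonneg (r * r * b), sq_nonneg b,
          mul_nonneg (mul_nonneg (sq_nonneg r) (sq_nonneg b))
            (by nlinarith : (0:ℝ) ≤ 1 - r ^ 2),
          mul_pos (by linarith : (0:ℝ) < 1 - r) (by linarith : (0:ℝ) < 1 + r)]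
  · rintro ⟨h1, h2⟩
    rw [abs_lt] at h1 h2
    rw [hc₁, hc₃] at h1 h2
    obtain ⟨h1a, h1b⟩ := h1
    obtain ⟨h2a, h2b⟩ := h2
    -- derive |r| < 1
    have hrlt : r < 1 := by
      by_contra hge
      push_neg at hge
      exact no_big_root h1a h1b h2a h2b hge
    have hrgt : -1 < r := by
      by_contra hge
      push_neg at hge
      exact no_big_root (r := -r) (b := -b) (by nlinarith) (by nlinarith)
        (by nlinarith) (by nlinarith) (by linarith)
    have hq2 : 0 < 1 + b + r * b := by
      by_contra hcon
      push_neg at hcon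
      nlinarith [mul_nonneg (by linarith : (0:ℝ) ≤ 1 - r) (by linarith : (0:ℝ) ≤ -(1 + b + r * b))]
    have hq3 : 0 < 1 - b + r * b := by
      by_contra hcon
      push_neg at hcon
      nlinarith [mul_nonneg (by linarith : (0:ℝ) ≤ 1 + r) (by linarith : (0:ℝ) ≤ -(1 - b + r * b))]
    have hq1 : r * b < 1 := by
      by_contra hcon
      push_neg at hcon
      nlinarith [mul_nonneg (sq_nonneg r) (by linarith : (0:ℝ) ≤ r * b),
        mul_nonneg (mul_nonneg (sq_nonneg r) (by linarith : (0:ℝ) ≤ r * b))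
          (by linarith : (0:ℝ) ≤ r * b - 1)]
    intro lam hl
    rw [hfact lam] at hl
    rcases mul_eq_zero.mp hl with hcase | hcase
    · have : lam = (r : ℂ) := by linear_combination hcase
      rw [this]
      simp only [Complex.norm_real, Real.norm_eq_abs]
      rw [abs_lt]; exact ⟨hrgt, hrlt⟩
    · exact quad_rev hq1 hq2 hq3 lam hcase
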